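/- Given 1-marginals (u_{i,+,+}), (u_{+,j,+}), (u_{+,+,k}) and entry upper bounds (p_{i,j,k}) for 3-arrays of size (r,c,h), there exist 2-marginals (v_{i,j,+}), (v_{i,+,k}), (v_{+,j,k}) for 3-arrays of size (3, rc, r+c+h) such that the set of nonnegative real (r,c,h)-arrays x satisfying x ≤ p entrywise and the given 1-marginals is in bijection with the set of nonnegative real (3, rc, r+c+h)-arrays y satisfying the constructed 2-marginals, and this bijection maps integer arrays to integer arrays in both directions. -/
import Mathlib
open Finset
namespace EmbedAux
variable {r c h : ℕ}

lemma Fin3_cases (P : Fin 3 → Prop) (h0 : P 0) (h1 : P 1) (h2 : P 2) : ∀ t, P t := by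
  intro t
  match t with
  | 0 => exact h0
  | 1 => exact h1
  | 2 => exact h2

lemma f00 : (((0:Fin 3) = 0)) = True := by decide
lemma f10 : (((1:Fin 3) = 0)) = False := by decide
lemma f11 : (((1:Fin 3) = 1)) = True := by decide
lemma f20 : (((2:Fin 3) = 0)) = False := by decide
lemma f21 : (((2:Fin 3) = 1)) = False := by decide
lemma f01 : (((0:Fin 3) = 1)) = False := by decide

def Uval (u1 : Fin r → ℕ) (u2 : Fin c → ℕ) : ℕ := min (univ.sup u1) (univ.sup u2)

lemma sum_le_U (u1 : Fin r → ℕ) (u2 : Fin c → ℕ) (x : Fin r → Fin c → Fin h → ℝ)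
    (hx0 : ∀ i j k, 0 ≤ x i j k)
    (h1 : ∀ i, ∑ j, ∑ k, x i j k = (u1 i : ℝ))
    (h2 : ∀ j, ∑ i, ∑ k, x i j k = (u2 j : ℝ))
    (i : Fin r) (j : Fin c) : ∑ k, x i j k ≤ (Uval u1 u2 : ℝ) := by
  have hA : ∑ k, x i j k ≤ (u1 i : ℝ) := by
    rw [← h1 i]
    exact Finset.single_le_sum (f := fun j' => ∑ k, x i j' k)
      (fun j' _ => Finset.sum_nonneg fun k _ => hx0 i j' k) (mem_univ j)
  have hB : ∑ k, x i j k ≤ (u2 j : ℝ) := by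
    rw [← h2 j]
    exact Finset.single_le_sum (f := fun i' => ∑ k, x i' j k)
      (fun i' _ => Finset.sum_nonneg fun k _ => hx0 i' j k) (mem_univ i)
  have hu1 : ((u1 i : ℕ) : ℝ) ≤ ((univ.sup u1 : ℕ) : ℝ) :=
    Nat.cast_le.mpr (Finset.le_sup (mem_univ i))
  have hu2 : ((u2 j : ℕ) : ℝ) ≤ ((univ.sup u2 : ℕ) : ℝ) :=
    Nat.cast_le.mpr (Finset.le_sup (mem_univ j))
  have : (Uval u1 u2 : ℝ) = min ((univ.sup u1 : ℕ) : ℝ) ((univ.sup u2 : ℕ) : ℝ) := by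
    simp [Uval]
  rw [this]
  exact le_min (hA.trans hu1) (hB.trans hu2)

def vAdef (u1 : Fin r → ℕ) (u2 : Fin c → ℕ) (p : Fin r → Fin c → Fin h → ℕ) :
    Fin 3 → Fin r × Fin c → ℕ :=
  fun t a => if t = 1 then ∑ k, p a.1 a.2 k else Uval u1 u2

def vBdef (u1 : Fin r → ℕ) (u2 : Fin c → ℕ) (u3 : Fin h → ℕ)
    (p : Fin r → Fin c → Fin h → ℕ) :
    Fin 3 → Fin h ⊕ Fin r ⊕ Fin c → ℕ :=
  fun t =>
    if t = 0 then
      Sum.elim (fun k => u3 k)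
        (Sum.elim (fun i => c * Uval u1 u2 - u1 i) (fun _ => 0))
    else if t = 1 then
      Sum.elim (fun k => (∑ i, ∑ j, p i j k) - u3 k)
        (Sum.elim (fun _ => 0) (fun j => u2 j))
    else
      Sum.elim (fun _ => 0)
        (Sum.elim (fun i => u1 i) (fun j => r * Uval u1 u2 - u2 j))

def vCdef (u1 : Fin r → ℕ) (u2 : Fin c → ℕ) (p : Fin r → Fin c → Fin h → ℕ) :
    Fin r × Fin c → Fin h ⊕ Fin r ⊕ Fin c → ℕ :=
  fun a => Sum.elim (fun k => p a.1 a.2 k)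
    (Sum.elim (fun i' => if i' = a.1 then Uval u1 u2 else 0)
      (fun j' => if j' = a.2 then Uval u1 u2 else 0))

noncomputable def F (u1 : Fin r → ℕ) (u2 : Fin c → ℕ) (p : Fin r → Fin c → Fin h → ℕ)
    (x : Fin r → Fin c → Fin h → ℝ) :
    Fin 3 → Fin r × Fin c → Fin h ⊕ Fin r ⊕ Fin c → ℝ :=
  fun t a =>
    if t = 0 then
      Sum.elim (fun k => x a.1 a.2 k)
        (Sum.elim (fun i' => if i' = a.1 then (Uval u1 u2 : ℝ) - ∑ k, x a.1 a.2 k else 0)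
          (fun _ => 0))
    else if t = 1 then
      Sum.elim (fun k => (p a.1 a.2 k : ℝ) - x a.1 a.2 k)
        (Sum.elim (fun _ => 0)
          (fun j' => if j' = a.2 then ∑ k, x a.1 a.2 k else 0))
    else
      Sum.elim (fun _ => 0)
        (Sum.elim (fun i' => if i' = a.1 then ∑ k, x a.1 a.2 k else 0)
          (fun j' => if j' = a.2 then (Uval u1 u2 : ℝ) - ∑ k, x a.1 a.2 k else 0))

lemma F_mem (u1 : Fin r → ℕ) (u2 : Fin c → ℕ) (u3 : Fin h → ℕ)
    (p : Fin r → Fin c → Fin h → ℕ) (x : Fin r → Fin c → Fin h → ℝ)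
    (hx0 : ∀ i j k, 0 ≤ x i j k) (hxp : ∀ i j k, x i j k ≤ (p i j k : ℝ))
    (h1 : ∀ i, ∑ j, ∑ k, x i j k = (u1 i : ℝ))
    (h2 : ∀ j, ∑ i, ∑ k, x i j k = (u2 j : ℝ))
    (h3 : ∀ k, ∑ i, ∑ j, x i j k = (u3 k : ℝ)) :
    (∀ t a g, 0 ≤ F u1 u2 p x t a g) ∧
    (∀ t a, ∑ g, F u1 u2 p x t a g = (vAdef u1 u2 p t a : ℝ)) ∧
    (∀ t g, ∑ a, F u1 u2 p x t a g = (vBdef u1 u2 u3 p t g : ℝ)) ∧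
    (∀ a g, ∑ t, F u1 u2 p x t a g = (vCdef u1 u2 p a g : ℝ)) := by
  have hU := sum_le_U u1 u2 x hx0 h1 h2
  have hs0 : ∀ (i : Fin r) (j : Fin c), (0:ℝ) ≤ ∑ k, x i j k :=
    fun i j => Finset.sum_nonneg fun k _ => hx0 i j k
  refine ⟨?_, ?_, ?_, ?_⟩
  · refine Fin3_cases _ ?_ ?_ ?_ <;> intro a g <;>
      rcases g with k | i' | j' <;>
      simp only [F, f00, f10, f11, f20, f21, f01, if_true, if_false, Sum.elim_inl, Sum.elim_inr]
    · exact hx0 _ _ _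
    · split
      · exact sub_nonneg.mpr (hU _ _)
      · exact le_rfl
    · exact le_rfl
    · exact sub_nonneg.mpr (hxp _ _ _)
    · exact le_rfl
    · split
      · exact hs0 _ _
      · exact le_rfl
    · exact le_rfl
    · split
      · exact hs0 _ _
      · exact le_rfl
    · split
      · exact sub_nonneg.mpr (hU _ _)
      · exact le_rfl
  · refine Fin3_cases _ ?_ ?_ ?_ <;> intro a <;>
      simp only [F, vAdef, f00, f10, f11, f20, f21, f01, if_true, if_false] <;>
      rw [Fintype.sum_sum_type, Fintype.sum_sum_type] <;>
      simp [Finset.sum_ite_eq', Finset.sum_sub_distrib] <;> ring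
  · refine Fin3_cases _ ?_ ?_ ?_ <;> intro g <;> rcases g with k | i0 | j0 <;>
      simp only [F, vBdef, f00, f10, f11, f20, f21, f01, if_true, if_false, Sum.elim_inl, Sum.elim_inr] <;>
      rw [Fintype.sum_prod_type]
    · exact h3 k
    · -- t=0, row i0 : c*U - u1 i0
      have key : (∑ i, ∑ j : Fin c,
          (if i0 = (i, j).1 then (Uval u1 u2 : ℝ) - ∑ k, x i j k else 0))
          = c * (Uval u1 u2 : ℝ) - (u1 i0 : ℝ) := by
        rw [Finset.sum_eq_single i0]
        · simp [Finset.sum_sub_distrib, ← h1 i0, mul_comm]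
        · intro i _ hi; simp [Ne.symm hi]
        · simp
      rw [key]
      have hle : (u1 i0 : ℝ) ≤ ((c * Uval u1 u2 : ℕ) : ℝ) := by
        push_cast
        rw [← h1 i0]
        calc ∑ j, ∑ k, x i0 j k ≤ ∑ _j : Fin c, (Uval u1 u2 : ℝ) :=
              Finset.sum_le_sum fun j _ => hU i0 j
          _ = c * (Uval u1 u2 : ℝ) := by simp [mul_comm]
      rw [Nat.cast_sub (by exact_mod_cast hle)]
      push_cast; ring
    · simp
    · -- t=1, dom k
      have hle : (u3 k : ℝ) ≤ ((∑ i, ∑ j, p i j k : ℕ) : ℝ) := by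
        rw [← h3 k]; push_cast
        exact Finset.sum_le_sum fun i _ => Finset.sum_le_sum fun j _ => hxp i j k
      rw [Nat.cast_sub (by exact_mod_cast hle)]
      push_cast
      rw [← h3 k]
      simp [Finset.sum_sub_distrib]
    · simp
    · -- t=1, col j0 : u2 j0
      have key : ∀ i : Fin r, (∑ j : Fin c,
          (if j0 = ((i, j) : Fin r × Fin c).2 then ∑ k, x i j k else 0)) = ∑ k, x i j0 k := by
        intro i
        rw [Finset.sum_eq_single j0]
        · simp
        · intro j _ hj; simp [Ne.symm hj]
        · simp
      simp only [key]
      exact h2 j0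
    · simp
    · -- t=2, row i0 : u1 i0
      have key : (∑ i, ∑ j : Fin c,
          (if i0 = ((i, j) : Fin r × Fin c).1 then ∑ k, x i j k else 0)) = (u1 i0 : ℝ) := by
        rw [Finset.sum_eq_single i0]
        · simp [h1 i0]
        · intro i _ hi; simp [Ne.symm hi]
        · simp
      rw [key]
    · -- t=2, col j0 : r*U - u2 j0
      have key : (∑ i, ∑ j : Fin c,
          (if j0 = ((i, j) : Fin r × Fin c).2 then (Uval u1 u2 : ℝ) - ∑ k, x i j k else 0))
          = r * (Uval u1 u2 : ℝ) - (u2 j0 : ℝ) := by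
        have e1 : ∀ i : Fin r, (∑ j : Fin c,
            (if j0 = ((i, j) : Fin r × Fin c).2 then (Uval u1 u2 : ℝ) - ∑ k, x i j k else 0))
            = (Uval u1 u2 : ℝ) - ∑ k, x i j0 k := by
          intro i
          rw [Finset.sum_eq_single j0]
          · simp
          · intro j _ hj; simp [Ne.symm hj]
          · simp
        simp only [e1]
        simp [Finset.sum_sub_distrib, ← h2 j0, mul_comm]
      rw [key]
      have hle : (u2 j0 : ℝ) ≤ ((r * Uval u1 u2 : ℕ) : ℝ) := by
        push_cast
        rw [← h2 j0]
        calc ∑ i, ∑ k, x i j0 k ≤ ∑ _i : Fin r, (Uval u1 u2 : ℝ) :=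
              Finset.sum_le_sum fun i _ => hU i j0
          _ = r * (Uval u1 u2 : ℝ) := by simp [mul_comm]
      rw [Nat.cast_sub (by exact_mod_cast hle)]
      push_cast; ring
  · intro a g
    rw [Fin.sum_univ_three]
    rcases g with k | i' | j' <;>
      simp only [F, vCdef, f00, f10, f11, f20, f21, f01, if_true, if_false, Sum.elim_inl, Sum.elim_inr]
    · ring
    · split <;> simp
    · split <;> simp


section Facts
variable (u1 : Fin r → ℕ) (u2 : Fin c → ℕ) (u3 : Fin h → ℕ)
    (p : Fin r → Fin c → Fin h → ℕ)
    (y : Fin 3 → Fin r × Fin c → Fin h ⊕ Fin r ⊕ Fin c → ℝ)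
    (hy0 : ∀ t a g, 0 ≤ y t a g)
    (hyA : ∀ t a, ∑ g, y t a g = (vAdef u1 u2 p t a : ℝ))
    (hyB : ∀ t g, ∑ a, y t a g = (vBdef u1 u2 u3 p t g : ℝ))
    (hyC : ∀ a g, ∑ t, y t a g = (vCdef u1 u2 p a g : ℝ))

include hy0 hyB in
lemma z1 : ∀ a j', y 0 a (.inr (.inr j')) = 0 := by
  intro a j'
  have := hyB 0 (.inr (.inr j'))
  simp only [vBdef, f00, if_true, Sum.elim_inr, Nat.cast_zero] at this
  exact (Finset.sum_eq_zero_iff_of_nonneg (fun a _ => hy0 0 a _)).1 this a (mem_univ a)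

include hy0 hyB in
lemma z2 : ∀ a i', y 1 a (.inr (.inl i')) = 0 := by
  intro a i'
  have := hyB 1 (.inr (.inl i'))
  simp only [vBdef, f10, f11, if_true, if_false, Sum.elim_inr, Sum.elim_inl,
    Nat.cast_zero] at this
  exact (Finset.sum_eq_zero_iff_of_nonneg (fun a _ => hy0 1 a _)).1 this a (mem_univ a)

include hy0 hyB in
lemma z3 : ∀ a k, y 2 a (.inl k) = 0 := by
  intro a k
  have := hyB 2 (.inl k)
  simp only [vBdef, f20, f21, if_false, Sum.elim_inl, Nat.cast_zero] at this
  exact (Finset.sum_eq_zero_iff_of_nonneg (fun a _ => hy0 2 a _)).1 this a (mem_univ a)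

include hy0 hyC in
lemma z4 : ∀ t a i', i' ≠ a.1 → y t a (.inr (.inl i')) = 0 := by
  intro t a i' hne
  have hC := hyC a (.inr (.inl i'))
  rw [Fin.sum_univ_three] at hC
  simp only [vCdef, Sum.elim_inr, Sum.elim_inl, if_neg hne, Nat.cast_zero] at hC
  have h0 := hy0 0 a (.inr (.inl i'))
  have h1 := hy0 1 a (.inr (.inl i'))
  have h2 := hy0 2 a (.inr (.inl i'))
  revert t
  refine Fin3_cases _ ?_ ?_ ?_ <;> linarith

include hy0 hyC in
lemma z5 : ∀ t a j', j' ≠ a.2 → y t a (.inr (.inr j')) = 0 := by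
  intro t a j' hne
  have hC := hyC a (.inr (.inr j'))
  rw [Fin.sum_univ_three] at hC
  simp only [vCdef, Sum.elim_inr, if_neg hne, Nat.cast_zero] at hC
  have h0 := hy0 0 a (.inr (.inr j'))
  have h1 := hy0 1 a (.inr (.inr j'))
  have h2 := hy0 2 a (.inr (.inr j'))
  revert t
  refine Fin3_cases _ ?_ ?_ ?_ <;> linarith

include hy0 hyB hyC in
lemma d1 : ∀ a k, y 1 a (.inl k) = (p a.1 a.2 k : ℝ) - y 0 a (.inl k) := by
  intro a k
  have hC := hyC a (.inl k)
  rw [Fin.sum_univ_three] at hC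
  simp only [vCdef, Sum.elim_inl] at hC
  have := z3 u1 u2 u3 p y hy0 hyB a k
  linarith

include hy0 hyA hyB hyC in
lemma d2 : ∀ a, y 0 a (.inr (.inl a.1)) = (Uval u1 u2 : ℝ) - ∑ k, y 0 a (.inl k) := by
  intro a
  have hA := hyA 0 a
  rw [Fintype.sum_sum_type, Fintype.sum_sum_type] at hA
  simp only [vAdef, f01, if_false] at hA
  have hcol : (∑ j', y 0 a (.inr (.inr j'))) = 0 :=
    Finset.sum_eq_zero fun j' _ => z1 u1 u2 u3 p y hy0 hyB a j'
  have hrow : (∑ i', y 0 a (.inr (.inl i'))) = y 0 a (.inr (.inl a.1)) := by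
    refine Finset.sum_eq_single a.1 (fun i' _ hne => z4 u1 u2 p y hy0 hyC 0 a i' hne) ?_
    simp
  rw [hcol, hrow] at hA
  linarith

include hy0 hyA hyB hyC in
lemma d3 : ∀ a, y 2 a (.inr (.inl a.1)) = ∑ k, y 0 a (.inl k) := by
  intro a
  have hC := hyC a (.inr (.inl a.1))
  rw [Fin.sum_univ_three] at hC
  simp only [vCdef, Sum.elim_inr, Sum.elim_inl, if_pos rfl, eq_self_iff_true, if_true] at hC
  have h2 := z2 u1 u2 u3 p y hy0 hyB a a.1
  have hd2 := d2 u1 u2 u3 p y hy0 hyA hyB hyC a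
  linarith

include hy0 hyA hyB hyC in
lemma d4 : ∀ a, y 2 a (.inr (.inr a.2)) = (Uval u1 u2 : ℝ) - ∑ k, y 0 a (.inl k) := by
  intro a
  have hA := hyA 2 a
  rw [Fintype.sum_sum_type, Fintype.sum_sum_type] at hA
  simp only [vAdef, f21, if_false] at hA
  have hdom : (∑ k, y 2 a (.inl k)) = 0 :=
    Finset.sum_eq_zero fun k _ => z3 u1 u2 u3 p y hy0 hyB a k
  have hrow : (∑ i', y 2 a (.inr (.inl i'))) = y 2 a (.inr (.inl a.1)) := by
    refine Finset.sum_eq_single a.1 (fun i' _ hne => z4 u1 u2 p y hy0 hyC 2 a i' hne) ?_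
    simp
  have hcol : (∑ j', y 2 a (.inr (.inr j'))) = y 2 a (.inr (.inr a.2)) := by
    refine Finset.sum_eq_single a.2 (fun j' _ hne => z5 u1 u2 p y hy0 hyC 2 a j' hne) ?_
    simp
  rw [hdom, hrow, hcol] at hA
  have hd3 := d3 u1 u2 u3 p y hy0 hyA hyB hyC a
  linarith

include hy0 hyA hyB hyC in
lemma d5 : ∀ a, y 1 a (.inr (.inr a.2)) = ∑ k, y 0 a (.inl k) := by
  intro a
  have hC := hyC a (.inr (.inr a.2))
  rw [Fin.sum_univ_three] at hC
  simp only [vCdef, Sum.elim_inr, if_pos rfl, eq_self_iff_true, if_true] at hC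
  have h1 := z1 u1 u2 u3 p y hy0 hyB a a.2
  have hd4 := d4 u1 u2 u3 p y hy0 hyA hyB hyC a
  linarith

include hy0 hyA hyB hyC in
lemma G_mem :
    (∀ i j k, 0 ≤ y 0 (i, j) (.inl k)) ∧
    (∀ i j k, y 0 (i, j) (.inl k) ≤ (p i j k : ℝ)) ∧
    (∀ i, ∑ j, ∑ k, y 0 (i, j) (.inl k) = (u1 i : ℝ)) ∧
    (∀ j, ∑ i, ∑ k, y 0 (i, j) (.inl k) = (u2 j : ℝ)) ∧
    (∀ k, ∑ i, ∑ j, y 0 (i, j) (.inl k) = (u3 k : ℝ)) := by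
  refine ⟨fun i j k => hy0 0 (i, j) (.inl k), ?_, ?_, ?_, ?_⟩
  · intro i j k
    have h1 := hy0 1 (i, j) (.inl k)
    rw [d1 u1 u2 u3 p y hy0 hyB hyC (i, j) k] at h1
    linarith
  · intro i
    have hB := hyB 2 (.inr (.inl i))
    rw [Fintype.sum_prod_type] at hB
    simp only [vBdef, f20, f21, if_false, Sum.elim_inr, Sum.elim_inl] at hB
    rw [← hB, Finset.sum_eq_single i]
    · refine Finset.sum_congr rfl fun j _ => ?_
      exact (d3 u1 u2 u3 p y hy0 hyA hyB hyC (i, j)).symm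
    · intro i' _ hne
      exact Finset.sum_eq_zero fun j _ => z4 u1 u2 p y hy0 hyC 2 (i', j) i (by simpa using (Ne.symm hne))
    · simp
  · intro j
    have hB := hyB 1 (.inr (.inr j))
    rw [Fintype.sum_prod_type] at hB
    simp only [vBdef, f10, f11, if_true, if_false, Sum.elim_inr] at hB
    rw [← hB]
    refine Finset.sum_congr rfl fun i _ => ?_
    rw [Finset.sum_eq_single j]
    · exact (d5 u1 u2 u3 p y hy0 hyA hyB hyC (i, j)).symm
    · intro j' _ hne
      exact z5 u1 u2 p y hy0 hyC 1 (i, j') j (by simpa using (Ne.symm hne))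
    · simp
  · intro k
    have hB := hyB 0 (.inl k)
    rw [Fintype.sum_prod_type] at hB
    simpa [vBdef] using hB

include hy0 hyA hyB hyC in
lemma FG : F u1 u2 p (fun i j k => y 0 (i, j) (.inl k)) = y := by
  funext t a g
  have ha : ((a.1, a.2) : Fin r × Fin c) = a := rfl
  revert g
  revert t
  refine Fin3_cases _ ?_ ?_ ?_ <;> intro g <;> rcases g with k | i' | j' <;>
    simp only [F, f00, f10, f11, f20, f21, f01, if_true, if_false,
      Sum.elim_inl, Sum.elim_inr, ha]
  · rcases eq_or_ne i' a.1 with rfl | hne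
    · rw [if_pos rfl, d2 u1 u2 u3 p y hy0 hyA hyB hyC a]
    · rw [if_neg hne, z4 u1 u2 p y hy0 hyC 0 a i' hne]
  · rw [z1 u1 u2 u3 p y hy0 hyB a j']
  · rw [d1 u1 u2 u3 p y hy0 hyB hyC a k]
  · rw [z2 u1 u2 u3 p y hy0 hyB a i']
  · rcases eq_or_ne j' a.2 with rfl | hne
    · rw [if_pos rfl, d5 u1 u2 u3 p y hy0 hyA hyB hyC a]
    · rw [if_neg hne, z5 u1 u2 p y hy0 hyC 1 a j' hne]
  · rw [z3 u1 u2 u3 p y hy0 hyB a k]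
  · rcases eq_or_ne i' a.1 with rfl | hne
    · rw [if_pos rfl, d3 u1 u2 u3 p y hy0 hyA hyB hyC a]
    · rw [if_neg hne, z4 u1 u2 p y hy0 hyC 2 a i' hne]
  · rcases eq_or_ne j' a.2 with rfl | hne
    · rw [if_pos rfl, d4 u1 u2 u3 p y hy0 hyA hyB hyC a]
    · rw [if_neg hne, z5 u1 u2 p y hy0 hyC 2 a j' hne]

end Facts
end EmbedAux

/-- Theorem 1.4: a system of 1-marginals and entry upper bounds for
(r,c,h)-arrays can be embedded, via suitable 2-marginals, into slim
(3, rc, r+c+h)-arrays, by an integer preserving bijection. -/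
theorem embed_one_marginals_in_slim_two_marginals
    (r c h : ℕ) (u1 : Fin r → ℕ) (u2 : Fin c → ℕ) (u3 : Fin h → ℕ)
    (p : Fin r → Fin c → Fin h → ℕ) :
    ∃ (vA : Fin 3 → Fin r × Fin c → ℕ)
      (vB : Fin 3 → (Fin h ⊕ Fin r ⊕ Fin c) → ℕ)
      (vC : Fin r × Fin c → (Fin h ⊕ Fin r ⊕ Fin c) → ℕ)
      (e : {x : Fin r → Fin c → Fin h → ℝ //
              (∀ i j k, 0 ≤ x i j k) ∧
              (∀ i j k, x i j k ≤ (p i j k : ℝ)) ∧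
              (∀ i, ∑ j, ∑ k, x i j k = (u1 i : ℝ)) ∧
              (∀ j, ∑ i, ∑ k, x i j k = (u2 j : ℝ)) ∧
              (∀ k, ∑ i, ∑ j, x i j k = (u3 k : ℝ))} ≃
           {y : Fin 3 → Fin r × Fin c → (Fin h ⊕ Fin r ⊕ Fin c) → ℝ //
              (∀ t a g, 0 ≤ y t a g) ∧
              (∀ t a, ∑ g, y t a g = (vA t a : ℝ)) ∧
              (∀ t g, ∑ a, y t a g = (vB t g : ℝ)) ∧
              (∀ a g, ∑ t, y t a g = (vC a g : ℝ))}),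
      ∀ x, (∀ i j k, ∃ n : ℤ, x.1 i j k = (n : ℝ)) ↔
        (∀ t a g, ∃ n : ℤ, (e x).1 t a g = (n : ℝ)) := by
  classical
  refine ⟨EmbedAux.vAdef u1 u2 p, EmbedAux.vBdef u1 u2 u3 p, EmbedAux.vCdef u1 u2 p,
    ⟨fun x => ⟨EmbedAux.F u1 u2 p x.1,
        EmbedAux.F_mem u1 u2 u3 p x.1 x.2.1 x.2.2.1 x.2.2.2.1 x.2.2.2.2.1 x.2.2.2.2.2⟩,
      fun y => ⟨fun i j k => y.1 0 (i, j) (.inl k),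
        EmbedAux.G_mem u1 u2 u3 p y.1 y.2.1 y.2.2.1 y.2.2.2.1 y.2.2.2.2⟩,
      fun x => Subtype.ext rfl,
      fun y => Subtype.ext
        (EmbedAux.FG u1 u2 u3 p y.1 y.2.1 y.2.2.1 y.2.2.2.1 y.2.2.2.2)⟩, ?_⟩
  intro x
  constructor
  · intro hx t a g
    choose n hn using hx
    have hs : ∀ i j, ∑ k, x.1 i j k = ((∑ k, n i j k : ℤ) : ℝ) := by
      intro i j
      rw [Finset.sum_congr rfl fun k _ => hn i j k]
      push_cast
      ring
    show ∃ m : ℤ, EmbedAux.F u1 u2 p x.1 t a g = (m : ℝ)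
    revert t
    refine EmbedAux.Fin3_cases _ ?_ ?_ ?_ <;>
      rcases g with k | i' | j' <;>
      simp only [EmbedAux.F, EmbedAux.f00, EmbedAux.f10, EmbedAux.f11, EmbedAux.f20,
        EmbedAux.f21, EmbedAux.f01, if_true, if_false, Sum.elim_inl, Sum.elim_inr]
    · exact ⟨n a.1 a.2 k, hn a.1 a.2 k⟩
    · split
      · exact ⟨(EmbedAux.Uval u1 u2 : ℤ) - ∑ k, n a.1 a.2 k, by rw [hs]; push_cast; ring⟩
      · exact ⟨0, by norm_num⟩
    · exact ⟨0, by norm_num⟩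
    · exact ⟨(p a.1 a.2 k : ℤ) - n a.1 a.2 k, by rw [hn]; push_cast; ring⟩
    · exact ⟨0, by norm_num⟩
    · split
      · exact ⟨∑ k, n a.1 a.2 k, by rw [hs]⟩
      · exact ⟨0, by norm_num⟩
    · exact ⟨0, by norm_num⟩
    · split
      · exact ⟨∑ k, n a.1 a.2 k, by rw [hs]⟩
      · exact ⟨0, by norm_num⟩
    · split
      · exact ⟨(EmbedAux.Uval u1 u2 : ℤ) - ∑ k, n a.1 a.2 k, by rw [hs]; push_cast; ring⟩
      · exact ⟨0, by norm_num⟩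
  · intro hy i j k
    exact hy 0 (i, j) (.inl k)
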